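/- Let Ω ⊆ ℝ^D be bounded and measurable with Lebesgue measure |Ω| > 0, and let (x_n)_{n∈ℕ} be an equidistributed sequence in Ω. Then for every d ∈ ℕ there exists N₀ ∈ ℕ such that for all N ≥ N₀ the point set X_N = {x_1,…,x_N} is ℙ_d(Ω)-unisolvent; that is, the only polynomial function p of degree at most d on ℝ^D satisfying p(x_n) = 0 for all n = 1,…,N is the zero polynomial. -/

import Mathlib

open MeasureTheory Filter

/-- A sequence `(xₙ)` is equidistributed in `Ω` if `(|Ω|/N) Σ_{n<N} g(xₙ) → ∫_Ω g` for
every bounded measurable `g : Ω → ℝ` that is continuous Lebesgue-almost everywhere. -/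
def Equidistributed {D : ℕ} (Ω : Set (EuclideanSpace ℝ (Fin D)))
    (x : ℕ → EuclideanSpace ℝ (Fin D)) : Prop :=
  ∀ g : EuclideanSpace ℝ (Fin D) → ℝ, Measurable g → (∃ M, ∀ y ∈ Ω, |g y| ≤ M) →
    (∀ᵐ y ∂(volume.restrict Ω), ContinuousWithinAt g Ω y) →
    Tendsto (fun N : ℕ => ((volume Ω).toReal / N) * ∑ n ∈ Finset.range N, g (x n))
      atTop (nhds (∫ y in Ω, g y))

/-- The zero set of a nonzero multivariate polynomial over `ℝ` is Lebesgue-null. -/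
lemma aux_poly_zero_set_null : ∀ (n : ℕ) (p : MvPolynomial (Fin n) ℝ), p ≠ 0 →
    volume {y : Fin n → ℝ | MvPolynomial.eval y p = 0} = 0 := by
  intro n
  induction n with
  | zero =>
      intro p hp
      obtain ⟨a, rfl⟩ := MvPolynomial.C_surjective (Fin 0) p
      have ha : a ≠ 0 := fun h => hp (by simp [h])
      have : {y : Fin 0 → ℝ | MvPolynomial.eval y (MvPolynomial.C a) = 0} = ∅ := by
        ext y; simp [ha]
      rw [this]; simp
  | succ n ih =>
      intro p hp
      set q := MvPolynomial.finSuccEquiv ℝ n p with hqdef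
      have hq0 : q ≠ 0 := by
        intro h
        apply hp
        have := (MvPolynomial.finSuccEquiv ℝ n).injective (a₁ := p) (a₂ := 0)
        simp only [map_zero] at this
        exact this (by rw [← hqdef, h])
      set S : Set (Fin (n + 1) → ℝ) := {y | MvPolynomial.eval y p = 0} with hS
      have hSmeas : MeasurableSet S :=
        (isClosed_eq (MvPolynomial.continuous_eval p) continuous_const).measurableSet
      have mp := (volume_preserving_piFinSuccAbove (fun _ : Fin (n + 1) => ℝ) 0).symm
      have h1 : volume ((MeasurableEquiv.piFinSuccAbove (fun _ : Fin (n + 1) => ℝ) 0).symm ⁻¹' S)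
          = volume S := mp.measure_preimage hSmeas.nullMeasurableSet
      -- swap so that the `Fin n → ℝ` coordinate comes first
      set s' : Set ((Fin n → ℝ) × ℝ) :=
        {w | MvPolynomial.eval (Fin.cons w.2 w.1) p = 0} with hs'
      have hs'meas : MeasurableSet s' := by
        have hc : Continuous fun w : (Fin n → ℝ) × ℝ =>
            MvPolynomial.eval (Fin.cons w.2 w.1 : Fin (n + 1) → ℝ) p := by
          apply (MvPolynomial.continuous_eval p).comp
          apply continuous_pi
          intro i
          refine Fin.cases ?_ ?_ i
          · simpa using continuous_snd
          · intro j; simp only [Fin.cons_succ]; exact (continuous_apply j).comp continuous_fst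
        exact (isClosed_eq hc continuous_const).measurableSet
      have hswap : Prod.swap ⁻¹' s'
          = (MeasurableEquiv.piFinSuccAbove (fun _ : Fin (n + 1) => ℝ) 0).symm ⁻¹' S := by
        ext ⟨a, z⟩
        simp only [Set.mem_preimage, Prod.swap_prod_mk, hs', Set.mem_setOf_eq,
          MeasurableEquiv.piFinSuccAbove_symm_apply, hS, Fin.insertNth_zero']
        simp [Fin.insertNthEquiv, Fin.insertNth_zero']
      have h2 : volume (Prod.swap ⁻¹' s') = volume s' := by
        exact Measure.measurePreserving_swap.measure_preimage hs'meas.nullMeasurableSet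
      have key : (volume : Measure ((Fin n → ℝ) × ℝ)) s' = 0 := by
        rw [show (volume : Measure ((Fin n → ℝ) × ℝ))
            = (volume : Measure (Fin n → ℝ)).prod (volume : Measure ℝ) from rfl]
        rw [Measure.measure_prod_null hs'meas]
        have hlc : q.leadingCoeff ≠ 0 := Polynomial.leadingCoeff_ne_zero.mpr hq0
        have hnull := ih q.leadingCoeff hlc
        have hae : ∀ᵐ z : Fin n → ℝ, MvPolynomial.eval z q.leadingCoeff ≠ 0 := by
          rw [ae_iff]
          simpa using hnull
        filter_upwards [hae] with z hz
        have hmapne : Polynomial.map (MvPolynomial.eval z) q ≠ 0 := by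
          intro h
          apply hz
          have h2 := congrArg (fun r : Polynomial ℝ => r.coeff q.natDegree) h
          simp only [Polynomial.coeff_map, Polynomial.coeff_zero] at h2
          exact h2
        have hset : (Prod.mk z ⁻¹' s')
            = {a : ℝ | Polynomial.IsRoot (Polynomial.map (MvPolynomial.eval z) q) a} := by
          ext a
          simp only [Set.mem_preimage, hs', Set.mem_setOf_eq, Polynomial.IsRoot]
          rw [MvPolynomial.eval_eq_eval_mv_eval' z a p]
        show (volume : Measure ℝ) (Prod.mk z ⁻¹' s') = 0
        rw [hset]
        exact (Polynomial.finite_setOf_isRoot hmapne).measure_zero _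
      rw [← h1, ← hswap, h2, key]

/-- Transfer to `EuclideanSpace`. -/
lemma aux_poly_zero_set_null_euclidean (D : ℕ) (p : MvPolynomial (Fin D) ℝ) (hp : p ≠ 0) :
    volume {y : EuclideanSpace ℝ (Fin D) | MvPolynomial.eval (fun i => y i) p = 0} = 0 := by
  have mp := EuclideanSpace.volume_preserving_symm_measurableEquiv_toLp (Fin D)
  have hmeas : MeasurableSet {z : Fin D → ℝ | MvPolynomial.eval z p = 0} :=
    (isClosed_eq (MvPolynomial.continuous_eval p) continuous_const).measurableSet
  have := mp.measure_preimage hmeas.nullMeasurableSet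
  have hpre : (MeasurableEquiv.toLp 2 (Fin D → ℝ)).symm ⁻¹'
      {z : Fin D → ℝ | MvPolynomial.eval z p = 0}
      = {y : EuclideanSpace ℝ (Fin D) | MvPolynomial.eval (fun i => y i) p = 0} := rfl
  rw [hpre] at this
  rw [this]
  exact aux_poly_zero_set_null D p hp

/-- A polynomial vanishing at every point of an equidistributed sequence in a
positive-volume bounded set is zero. -/
lemma aux_vanish_all (D : ℕ) (Ω : Set (EuclideanSpace ℝ (Fin D)))
    (hΩmeas : MeasurableSet Ω) (hΩbd : Bornology.IsBounded Ω)
    (hvol : 0 < (volume Ω).toReal)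
    (x : ℕ → EuclideanSpace ℝ (Fin D))
    (hequi : Equidistributed Ω x)
    (p : MvPolynomial (Fin D) ℝ)
    (hvan : ∀ n, MvPolynomial.eval (fun i => x n i) p = 0) : p = 0 := by
  by_contra hp
  set f : EuclideanSpace ℝ (Fin D) → ℝ :=
    fun y => MvPolynomial.eval (fun i => y i) p with hf
  have hfc : Continuous f := by
    exact (MvPolynomial.continuous_eval p).comp
      (continuous_pi fun i => (continuous_apply i).comp (PiLp.continuous_ofLp (p := 2) (β := fun _ : Fin D => ℝ)))
  set g : EuclideanSpace ℝ (Fin D) → ℝ := fun y => (f y) ^ 2 with hg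
  have hgc : Continuous g := hfc.pow 2
  have hgm : Measurable g := hgc.measurable
  have hK : IsCompact (closure Ω) := hΩbd.isCompact_closure
  obtain ⟨C, hC⟩ := hK.exists_bound_of_continuousOn hgc.continuousOn
  have hbd : ∃ M, ∀ y ∈ Ω, |g y| ≤ M :=
    ⟨C, fun y hy => by simpa [Real.norm_eq_abs] using hC y (subset_closure hy)⟩
  have hcont : ∀ᵐ y ∂(volume.restrict Ω), ContinuousWithinAt g Ω y :=
    Filter.Eventually.of_forall fun y => hgc.continuousWithinAt
  have hT := hequi g hgm hbd hcont
  have hfun : (fun N : ℕ => ((volume Ω).toReal / N) * ∑ n ∈ Finset.range N, g (x n))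
      = fun _ : ℕ => (0 : ℝ) := by
    funext N
    have : ∀ n ∈ Finset.range N, g (x n) = 0 := fun n _ => by
      simp [hg, hf, hvan n]
    rw [Finset.sum_eq_zero this, mul_zero]
  rw [hfun] at hT
  have hint0 : ∫ y in Ω, g y = 0 := (tendsto_nhds_unique tendsto_const_nhds hT).symm
  have hinteg : IntegrableOn g Ω volume :=
    (hgc.continuousOn.integrableOn_compact hK).mono_set subset_closure
  have hzero : g =ᵐ[volume.restrict Ω] 0 :=
    (integral_eq_zero_iff_of_nonneg (fun y => sq_nonneg (f y)) hinteg).mp hint0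
  have hne : (volume.restrict Ω) {y | g y ≠ 0} = 0 := by
    have h := hzero
    rw [Filter.EventuallyEq, ae_iff] at h
    simpa using h
  have hmeasne : MeasurableSet {y | g y ≠ 0} :=
    (hgm (measurableSet_singleton 0)).compl
  rw [Measure.restrict_apply hmeasne] at hne
  have hZ : volume {y : EuclideanSpace ℝ (Fin D) |
      MvPolynomial.eval (fun i => y i) p = 0} = 0 :=
    aux_poly_zero_set_null_euclidean D p hp
  have hsub : Ω ⊆ ({y | g y ≠ 0} ∩ Ω) ∪
      {y : EuclideanSpace ℝ (Fin D) | MvPolynomial.eval (fun i => y i) p = 0} := by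
    intro y hy
    by_cases h : f y = 0
    · exact Or.inr h
    · exact Or.inl ⟨by simp [hg, pow_eq_zero_iff, h], hy⟩
  have : volume Ω = 0 := by
    refine le_antisymm ?_ zero_le
    calc volume Ω ≤ _ := measure_mono hsub
    _ ≤ volume ({y | g y ≠ 0} ∩ Ω) + volume {y : EuclideanSpace ℝ (Fin D) |
        MvPolynomial.eval (fun i => y i) p = 0} := measure_union_le _ _
    _ = 0 := by rw [hne, hZ, add_zero]
  rw [this] at hvol
  simp at hvol

/-- **Equidistributed sequences are eventually unisolvent.** For every degree `d` there
is `N₀` such that for all `N ≥ N₀` the point set `{x₁,…,x_N}` is `ℙ_d(Ω)`-unisolvent: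
the only polynomial of degree at most `d` vanishing at all of `x₁,…,x_N` is the zero
polynomial. -/
theorem equidistributed_eventually_unisolvent
    (D : ℕ) (Ω : Set (EuclideanSpace ℝ (Fin D)))
    (hΩmeas : MeasurableSet Ω) (hΩbd : Bornology.IsBounded Ω)
    (hvol : 0 < (volume Ω).toReal)
    (x : ℕ → EuclideanSpace ℝ (Fin D)) (hxΩ : ∀ n, x n ∈ Ω)
    (hequi : Equidistributed Ω x) :
    ∀ d : ℕ, ∃ N₀ : ℕ, ∀ N ≥ N₀,
      ∀ p : MvPolynomial (Fin D) ℝ, p.totalDegree ≤ d →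
        (∀ n < N, MvPolynomial.eval (fun i => x n i) p = 0) → p = 0 := by
  intro d
  classical
  set V : Submodule ℝ (MvPolynomial (Fin D) ℝ) :=
    MvPolynomial.restrictTotalDegree (Fin D) ℝ d with hV
  haveI : FiniteDimensional ℝ V := by
    rw [hV]; infer_instance
  let ev : ℕ → (V →ₗ[ℝ] ℝ) := fun n =>
    (MvPolynomial.aeval (fun i => x n i)).toLinearMap.comp V.subtype
  have hev : ∀ (n : ℕ) (v : V), ev n v
      = MvPolynomial.eval (fun i => x n i) (v : MvPolynomial (Fin D) ℝ) := by
    intro n v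
    simp only [ev, LinearMap.comp_apply, Submodule.coe_subtype, AlgHom.toLinearMap_apply]
    rw [← MvPolynomial.coe_aeval_eq_eval]
    rfl
  let K : ℕ → Submodule ℝ V := fun N => ⨅ n ∈ Finset.range N, LinearMap.ker (ev n)
  have hmemK : ∀ (N : ℕ) (v : V), v ∈ K N ↔ ∀ n < N, ev n v = 0 := by
    intro N v
    simp [K, Submodule.mem_iInf, LinearMap.mem_ker]
  have hanti : ∀ {M N : ℕ}, M ≤ N → K N ≤ K M := by
    intro M N hMN v hv
    rw [hmemK] at hv ⊢
    exact fun n hn => hv n (lt_of_lt_of_le hn hMN)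
  let r : ℕ → ℕ := fun N => Module.finrank ℝ (K N)
  have hmem0 : r 0 ∈ Set.range r := ⟨0, rfl⟩
  obtain ⟨N₀, hN₀⟩ : ∃ N₀, ∀ N, r N₀ ≤ r N := by
    obtain ⟨N₀, hN₀⟩ := Nat.sInf_mem (Set.nonempty_of_mem hmem0)
    exact ⟨N₀, fun N => hN₀ ▸ Nat.sInf_le ⟨N, rfl⟩⟩
  have hstab : ∀ N ≥ N₀, K N = K N₀ := fun N hN =>
    Submodule.eq_of_le_of_finrank_le (hanti hN) (hN₀ N)
  have hbot : K N₀ = ⊥ := by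
    rw [eq_bot_iff]
    intro v hv
    have hall : ∀ n, ev n v = 0 := by
      intro n
      have h1 : K (max N₀ (n + 1)) = K N₀ := hstab _ (le_max_left _ _)
      have hv' : v ∈ K (max N₀ (n + 1)) := h1 ▸ hv
      exact (hmemK _ v).mp hv' n (lt_of_lt_of_le (Nat.lt_succ_self n) (le_max_right _ _))
    have hcoe : (v : MvPolynomial (Fin D) ℝ) = 0 :=
      aux_vanish_all D Ω hΩmeas hΩbd hvol x hequi _
        (fun n => by rw [← hev n v]; exact hall n)
    simpa [Submodule.mem_bot] using Submodule.coe_eq_zero.mp hcoe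
  refine ⟨N₀, fun N hN p hdeg hvanish => ?_⟩
  have hpV : p ∈ V := by
    rw [hV, MvPolynomial.mem_restrictTotalDegree]; exact hdeg
  have hv : (⟨p, hpV⟩ : V) ∈ K N := by
    rw [hmemK]
    intro n hn
    rw [hev]
    exact hvanish n hn
  rw [hstab N hN, hbot, Submodule.mem_bot] at hv
  simpa using congrArg (Subtype.val) hv
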